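/- Let n ≥ 2 and for i = 1,…,n define the contracting similarities ψᵢ: ℝ³ → ℝ³ by ψᵢ(x,y,z) = ((x + 2i − 2)/(2n−1), y/(2n−1), z/(2n−1)). Let B' be the open Euclidean ball in ℝ³ with center (1/2, 0, 0) and radius 5/6. Then the closed balls ψ₁(B̄'),…,ψₙ(B̄') are pairwise disjoint and all contained in B', and the attractor 𝒞ₙ of {ψ₁,…,ψₙ} satisfies 𝒞ₙ ⊂ B'. -/
import Mathlib


open Metric Set

/-- The contracting similarities `ψᵢ(x,y,z) = ((x + 2i - 2)/(2n-1), y/(2n-1), z/(2n-1))`,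
`i = 1, …, n` (indexed here by `i : Fin n`, so `i = 0, …, n-1` gives the shift `2i`). -/
noncomputable def psi (n : ℕ) (i : Fin n) (x : EuclideanSpace ℝ (Fin 3)) :
    EuclideanSpace ℝ (Fin 3) :=
  (2 * (n : ℝ) - 1)⁻¹ • (x + EuclideanSpace.single (0 : Fin 3) (2 * (i : ℕ) : ℝ))

/-- The open ball `B'` in `ℝ³` with center `(1/2, 0, 0)` and radius `5/6`. -/
noncomputable def ballB' : Set (EuclideanSpace ℝ (Fin 3)) :=
  Metric.ball (EuclideanSpace.single (0 : Fin 3) (1 / 2 : ℝ)) (5 / 6)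

lemma esingle_add (i : Fin 3) (a b : ℝ) :
    EuclideanSpace.single i a + EuclideanSpace.single i b
      = EuclideanSpace.single i (a + b) := by
  ext j; by_cases h : j = i <;> simp [h]

lemma esingle_smul (i : Fin 3) (r a : ℝ) :
    r • EuclideanSpace.single i a = EuclideanSpace.single i (r * a) := by
  ext j; by_cases h : j = i <;> simp [h]

lemma psi_dist (n : ℕ) (i : Fin n) (x y : EuclideanSpace ℝ (Fin 3)) :
    dist (psi n i x) (psi n i y) = |(2 * (n : ℝ) - 1)⁻¹| * dist x y := by
  simp only [psi, dist_smul₀, dist_add_right, Real.norm_eq_abs]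

lemma psi_center (n : ℕ) (i : Fin n) :
    psi n i (EuclideanSpace.single (0 : Fin 3) (1 / 2 : ℝ))
      = EuclideanSpace.single (0 : Fin 3)
          ((2 * (n : ℝ) - 1)⁻¹ * (1 / 2 + 2 * (i : ℕ))) := by
  rw [psi, esingle_add, esingle_smul]

/-- For `n ≥ 2`, the closed balls `ψ₁(B̄'), …, ψₙ(B̄')` are pairwise disjoint and contained
in `B'`, and the attractor `𝒞ₙ` of `{ψ₁, …, ψₙ}` satisfies `𝒞ₙ ⊂ B'`. -/
theorem psi_balls_disjoint_and_attractor_subset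
    (n : ℕ) (hn : 2 ≤ n)
    (Cn : Set (EuclideanSpace ℝ (Fin 3))) (hCne : Cn.Nonempty) (hCcomp : IsCompact Cn)
    (hCinv : Cn = ⋃ i, psi n i '' Cn) :
    (∀ i j : Fin n, i ≠ j →
      Disjoint (psi n i '' closure ballB') (psi n j '' closure ballB')) ∧
    (∀ i : Fin n, psi n i '' closure ballB' ⊆ ballB') ∧
    Cn ⊆ ballB' := by
  set c : EuclideanSpace ℝ (Fin 3) := EuclideanSpace.single (0 : Fin 3) (1 / 2 : ℝ) with hc
  set r : ℝ := (2 * (n : ℝ) - 1)⁻¹ with hrdef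
  have hn3 : (3 : ℝ) ≤ 2 * (n : ℝ) - 1 := by
    have : (2 : ℝ) ≤ (n : ℝ) := by exact_mod_cast hn
    linarith
  have hden : (0 : ℝ) < 2 * (n : ℝ) - 1 := by linarith
  have hr0 : 0 < r := inv_pos.mpr hden
  have hr3 : r ≤ 1 / 3 := by
    rw [hrdef, inv_le_comm₀ (by linarith) (by norm_num)]
    linarith
  have habs : |r| = r := abs_of_pos hr0
  have hclos : closure ballB' = closedBall c (5 / 6) := by
    rw [ballB', closure_ball c (by norm_num : (5/6 : ℝ) ≠ 0)]
  have hdist : ∀ (i : Fin n) (x y : EuclideanSpace ℝ (Fin 3)),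
      dist (psi n i x) (psi n i y) = r * dist x y := by
    intro i x y; rw [psi_dist, ← hrdef, habs]
  -- distance from ψᵢ(c) to c
  have hcent : ∀ i : Fin n, dist (psi n i c) c ≤ 1 / 2 - r / 2 := by
    intro i
    rw [psi_center, hc, EuclideanSpace.dist_single_same, Real.dist_eq, ← hrdef]
    have hi : (i : ℕ) < n := i.isLt
    have hi' : ((i : ℕ) : ℝ) ≤ (n : ℝ) - 1 := by
      have : ((i : ℕ) : ℝ) + 1 ≤ (n : ℝ) := by exact_mod_cast hi
      linarith
    have hub : r * (1 / 2 + 2 * (i : ℕ)) ≤ 1 - r / 2 := by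
      have : r * (2 * (n : ℝ) - 1) = 1 := inv_mul_cancel₀ (by linarith)
      nlinarith [mul_nonneg hr0.le (by positivity : (0:ℝ) ≤ 2 * ((i:ℕ):ℝ))]
    have hlb : r / 2 ≤ r * (1 / 2 + 2 * (i : ℕ)) := by
      nlinarith [mul_nonneg hr0.le (by positivity : (0:ℝ) ≤ 2 * ((i:ℕ):ℝ))]
    rw [abs_le]
    constructor <;> linarith
  -- distance between centers of distinct small balls
  have hsep : ∀ i j : Fin n, i ≠ j → 2 * r ≤ dist (psi n i c) (psi n j c) := by
    intro i j hij
    rw [psi_center, psi_center, EuclideanSpace.dist_single_same, Real.dist_eq, ← hrdef]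
    have hone : (1 : ℝ) ≤ |((i : ℕ) : ℝ) - ((j : ℕ) : ℝ)| := by
      have hne : (i : ℕ) ≠ (j : ℕ) := fun h => hij (Fin.ext h)
      rcases lt_or_gt_of_ne hne with h | h
      · rw [abs_sub_comm, le_abs]
        left
        have h' : ((i : ℕ) : ℝ) + 1 ≤ ((j : ℕ) : ℝ) := by exact_mod_cast h
        linarith
      · rw [le_abs]
        left
        have h' : ((j : ℕ) : ℝ) + 1 ≤ ((i : ℕ) : ℝ) := by exact_mod_cast h
        linarith
    have : r * (1/2 + 2 * (i:ℕ)) - r * (1/2 + 2 * (j:ℕ))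
        = r * (2 * (((i:ℕ):ℝ) - ((j:ℕ):ℝ))) := by ring
    rw [this, abs_mul, abs_mul, abs_of_pos hr0, abs_of_pos (by norm_num : (0:ℝ) < 2)]
    nlinarith
  -- each small closed ball is inside B'
  have hsub : ∀ i : Fin n, psi n i '' closure ballB' ⊆ ballB' := by
    intro i x hx
    rcases hx with ⟨a, ha, rfl⟩
    rw [hclos, mem_closedBall] at ha
    rw [ballB', mem_ball]
    calc dist (psi n i a) c
        ≤ dist (psi n i a) (psi n i c) + dist (psi n i c) c := dist_triangle _ _ _
      _ ≤ r * (5 / 6) + (1 / 2 - r / 2) := by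
          have := hdist i a c
          have := hcent i
          nlinarith
      _ < 5 / 6 := by nlinarith
  refine ⟨?_, hsub, ?_⟩
  · intro i j hij
    rw [Set.disjoint_left]
    rintro x ⟨a, ha, rfl⟩ ⟨b, hb, hx⟩
    rw [hclos, mem_closedBall] at ha hb
    have h1 : dist (psi n i a) (psi n i c) ≤ r * (5 / 6) := by
      rw [hdist]; nlinarith
    have h2 : dist (psi n j b) (psi n j c) ≤ r * (5 / 6) := by
      rw [hdist]; nlinarith
    have h3 := hsep i j hij
    have h4 : dist (psi n i c) (psi n j c)
        ≤ dist (psi n i c) (psi n i a) + dist (psi n i a) (psi n j c) := dist_triangle _ _ _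
    rw [hx] at h2
    rw [dist_comm] at h1
    linarith
  · -- attractor is inside B'
    obtain ⟨x₀, hx₀, hmax⟩ := hCcomp.exists_isMaxOn hCne
      ((continuous_id.dist continuous_const).continuousOn (s := Cn) (f := fun x => dist x c))
    have hx₀' := hx₀
    rw [hCinv, mem_iUnion] at hx₀'
    obtain ⟨i, y, hy, hxy⟩ := hx₀'
    have hM : dist x₀ c ≤ r * dist x₀ c + (1 / 2 - r / 2) := by
      calc dist x₀ c ≤ dist x₀ (psi n i c) + dist (psi n i c) c := dist_triangle _ _ _
        _ ≤ r * dist y c + (1 / 2 - r / 2) := by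
            rw [← hxy, hdist]
            have := hcent i
            linarith
        _ ≤ r * dist x₀ c + (1 / 2 - r / 2) := by
            have h6 : dist y c ≤ dist x₀ c := hmax hy
            nlinarith [mul_le_mul_of_nonneg_left h6 hr0.le]
    have hhalf : dist x₀ c ≤ 1 / 2 := by nlinarith
    intro x hx
    rw [ballB', mem_ball]
    have h7 : dist x c ≤ dist x₀ c := hmax hx
    linarith
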